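/- Let S be a data independent, processor symmetric, and location symmetric memory system all of whose traces are causal. Suppose there is a simple witness Ω such that for all unambiguous traces τ of S(n,m) and all k with 1 ≤ k ≤ min{n,m}, the constraint graph G(Ω)(τ) does not have a canonical k-nice cycle. Then every trace of S(n,m) is sequentially consistent. -/

import Mathlib

/-- A memory operation: read or write. -/
inductive MemOp : Type
  | R : MemOp
  | W : MemOp
deriving DecidableEq

/-- A memory event ⟨op, proc, loc, data⟩. -/
structure MemEvent : Type where
  op : MemOp
  proc : ℕ
  loc : ℕ
  data : ℕ
deriving DecidableEq

instance : Inhabited MemEvent := ⟨⟨MemOp.R, 1, 1, 0⟩⟩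

/-- A trace is a finite sequence of memory events (1-indexed via `ev`). -/
abbrev MTrace := List MemEvent

/-- The x-th event of a trace (1-indexed). -/
def ev (τ : MTrace) (x : ℕ) : MemEvent := τ.getD (x - 1) default

/-- dom(τ) = {1, …, |τ|}. -/
def Dom (τ : MTrace) : Set ℕ := {x | 1 ≤ x ∧ x ≤ τ.length}

/-- P(τ,i): indices of events of processor i. -/
def Pset (τ : MTrace) (i : ℕ) : Set ℕ := {x | x ∈ Dom τ ∧ (ev τ x).proc = i}

/-- L(τ,j): indices of events to location j. -/
def Lset (τ : MTrace) (j : ℕ) : Set ℕ := {x | x ∈ Dom τ ∧ (ev τ x).loc = j}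

/-- L^w(τ,j): indices of write events to location j. -/
def Lw (τ : MTrace) (j : ℕ) : Set ℕ := {x | x ∈ Lset τ j ∧ (ev τ x).op = MemOp.W}

/-- L^r(τ,j): indices of read events to location j. -/
def Lr (τ : MTrace) (j : ℕ) : Set ℕ := {x | x ∈ Lset τ j ∧ (ev τ x).op = MemOp.R}

/-- A trace is unambiguous if every write event has a nonzero data value distinct
from that of every other write event to the same location. -/
def Unambiguous (τ : MTrace) : Prop :=
  ∀ j, ∀ x ∈ Lw τ j, (ev τ x).data ≠ 0 ∧
    ∀ y ∈ Lw τ j, y ≠ x → (ev τ y).data ≠ (ev τ x).data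

/-- A trace is causal if the data value of every read event is 0 or equals the data
value of some write event to the same location. -/
def Causal (τ : MTrace) : Prop :=
  ∀ j, ∀ x ∈ Lr τ j, (ev τ x).data = 0 ∨ ∃ y ∈ Lw τ j, (ev τ y).data = (ev τ x).data

/-- ⟨x,y⟩ ∈ M(τ,i): the total order on P(τ,i) given by index order. -/
def Mrel (τ : MTrace) (i : ℕ) (x y : ℕ) : Prop :=
  x ∈ Pset τ i ∧ y ∈ Pset τ i ∧ x < y

/-- A sequence of memory events (given by its length and 1-indexed access function)
is serial: each event's data value equals that of the latest write to the same
location at an index no larger than its own, and equals 0 if no such write exists. -/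
def SerialFn (len : ℕ) (e : ℕ → MemEvent) : Prop :=
  ∀ u, 1 ≤ u → u ≤ len →
    ((∀ k, 1 ≤ k → k ≤ u → ¬((e k).op = MemOp.W ∧ (e k).loc = (e u).loc)) →
       (e u).data = 0) ∧
    (∀ k, 1 ≤ k → k ≤ u → (e k).op = MemOp.W → (e k).loc = (e u).loc →
       (∀ k', k < k' → k' ≤ u → ¬((e k').op = MemOp.W ∧ (e k').loc = (e u).loc)) →
       (e u).data = (e k).data)

/-- f (with inverse g) is a permutation of {1,…,|τ|} satisfying conditions C1 and C2. -/
def IsSCWitness (τ : MTrace) (f g : ℕ → ℕ) : Prop :=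
  (∀ u ∈ Dom τ, f u ∈ Dom τ) ∧
  (∀ u ∈ Dom τ, g u ∈ Dom τ) ∧
  (∀ u ∈ Dom τ, g (f u) = u) ∧
  (∀ u ∈ Dom τ, f (g u) = u) ∧
  (∀ i u v, Mrel τ i u v → f u < f v) ∧
  SerialFn τ.length (fun x => ev τ (g x))

/-- A trace is sequentially consistent if some permutation satisfies C1 and C2. -/
def SeqConsistent (τ : MTrace) : Prop := ∃ f g, IsSCWitness τ f g

/-- A witness assigns to each trace and location a strict total order on L^w(τ,j). -/
def IsWitness (Ω : MTrace → ℕ → ℕ → ℕ → Prop) : Prop :=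
  ∀ τ j,
    (∀ x y, Ω τ j x y → x ∈ Lw τ j ∧ y ∈ Lw τ j) ∧
    (∀ x, ¬ Ω τ j x x) ∧
    (∀ x y z, Ω τ j x y → Ω τ j y z → Ω τ j x z) ∧
    (∀ x y, x ∈ Lw τ j → y ∈ Lw τ j → x ≠ y → Ω τ j x y ∨ Ω τ j y x)

/-- A witness is simple if it orders the writes to each location by index order. -/
def IsSimple (Ω : MTrace → ℕ → ℕ → ℕ → Prop) : Prop :=
  ∀ τ j x y, Ω τ j x y ↔ (x ∈ Lw τ j ∧ y ∈ Lw τ j ∧ x < y)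

/-- ⟨x,y⟩ ∈ Ω^e(τ,j): the extension of the witness order to all events to location j. -/
def OmegaE (Ω : MTrace → ℕ → ℕ → ℕ → Prop) (τ : MTrace) (j x y : ℕ) : Prop :=
  x ∈ Lset τ j ∧ y ∈ Lset τ j ∧
  (((ev τ x).data = (ev τ y).data ∧ (ev τ x).op = MemOp.W ∧ (ev τ y).op = MemOp.R) ∨
   ((ev τ x).data = 0 ∧ (ev τ y).data ≠ 0) ∨
   (∃ a b, a ∈ Lw τ j ∧ b ∈ Lw τ j ∧ Ω τ j a b ∧
      (ev τ a).data = (ev τ x).data ∧ (ev τ b).data = (ev τ y).data))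

/-- Edge of the constraint graph G(Ω)(τ): union of the M(τ,i) and the Ω^e(τ,j). -/
def GEdge (Ω : MTrace → ℕ → ℕ → ℕ → Prop) (τ : MTrace) (x y : ℕ) : Prop :=
  (∃ i, Mrel τ i x y) ∨ (∃ j, OmegaE Ω τ j x y)

/-- The constraint graph G(Ω)(τ) has a cycle. -/
def HasCycle (Ω : MTrace → ℕ → ℕ → ℕ → Prop) (τ : MTrace) : Prop :=
  ∃ x, Relation.TransGen (GEdge Ω τ) x x

/-- The constraint graph G(Ω)(τ) is acyclic. -/
def Acyclic (Ω : MTrace → ℕ → ℕ → ℕ → Prop) (τ : MTrace) : Prop :=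
  ¬ HasCycle Ω τ

/-- All events of the trace have processor in {1,…,n} and location in {1,…,m}. -/
def InRange (n m : ℕ) (τ : MTrace) : Prop :=
  ∀ e ∈ τ, 1 ≤ e.proc ∧ e.proc ≤ n ∧ 1 ≤ e.loc ∧ e.loc ≤ m

/-- All data values in the trace lie in {0,…,v}. -/
def DataBounded (v : ℕ) (τ : MTrace) : Prop := ∀ e ∈ τ, e.data ≤ v

/-- A memory system with n processors and m locations: for each v ≥ 1, a set S(n,m,v)
of traces whose processors, locations, and data values are in range. -/
structure MemSystem (n m : ℕ) : Type where
  S : ℕ → Set MTrace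
  wf : ∀ v, 1 ≤ v → ∀ τ ∈ S v, InRange n m τ ∧ DataBounded v τ

/-- S(n,m): the union of the S(n,m,v) over v ≥ 1. -/
def MemSystem.traces {n m : ℕ} (M : MemSystem n m) : Set MTrace :=
  {τ | ∃ v, 1 ≤ v ∧ τ ∈ M.S v}

/-- A renaming function λ with λ(j,0) = 0 for every location j. -/
def IsRenaming (lam : ℕ → ℕ → ℕ) : Prop := ∀ j, lam j 0 = 0

/-- λ^d: rename the data value of each event according to its location. -/
def renameD (lam : ℕ → ℕ → ℕ) (τ : MTrace) : MTrace :=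
  τ.map fun e => { e with data := lam e.loc e.data }

/-- The memory system is data independent: a trace is in S(n,m,v) iff it is obtained
from an unambiguous trace of S(n,m) by a renaming function with values in {0,…,v}. -/
def DataIndependent {n m : ℕ} (M : MemSystem n m) : Prop :=
  ∀ v, 1 ≤ v → ∀ τ, τ ∈ M.S v ↔
    ∃ τ' lam, τ' ∈ M.traces ∧ Unambiguous τ' ∧ IsRenaming lam ∧
      (∀ j d, lam j d ≤ v) ∧ τ = renameD lam τ'

/-- λ^p: rename the processor of each event. -/
def renameP (lam : ℕ → ℕ) (τ : MTrace) : MTrace :=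
  τ.map fun e => { e with proc := lam e.proc }

/-- λ^l: rename the location of each event. -/
def renameL (lam : ℕ → ℕ) (τ : MTrace) : MTrace :=
  τ.map fun e => { e with loc := lam e.loc }

/-- λ is a permutation of {1,…,n}. -/
def PermOn (n : ℕ) (lam : ℕ → ℕ) : Prop :=
  Set.BijOn lam (Set.Icc 1 n) (Set.Icc 1 n)

/-- The memory system is processor symmetric. -/
def ProcSymmetric {n m : ℕ} (M : MemSystem n m) : Prop :=
  ∀ lam, PermOn n lam → ∀ v τ, τ ∈ M.S v → renameP lam τ ∈ M.S v

/-- The memory system is location symmetric. -/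
def LocSymmetric {n m : ℕ} (M : MemSystem n m) : Prop :=
  ∀ lam, PermOn m lam → ∀ v τ, τ ∈ M.S v → renameL lam τ ∈ M.S v

/-- x ⊕ 1 in the cyclic group {1,…,k} with identity k. -/
def cyc (k x : ℕ) : ℕ := if x = k then 1 else x + 1

/-- A k-nice cycle u_1,v_1,…,u_k,v_k in G(Ω)(τ): distinct vertices; each ⟨u_x,v_x⟩
is a processor edge, each ⟨v_x,u_{x⊕1}⟩ a location edge; no processor (resp.
location) contributes two edges. -/
def NiceCycle (Ω : MTrace → ℕ → ℕ → ℕ → Prop) (τ : MTrace) (k : ℕ)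
    (u v : ℕ → ℕ) : Prop :=
  1 ≤ k ∧
  (∀ x ∈ Set.Icc 1 k, ∀ y ∈ Set.Icc 1 k, x ≠ y → u x ≠ u y) ∧
  (∀ x ∈ Set.Icc 1 k, ∀ y ∈ Set.Icc 1 k, x ≠ y → v x ≠ v y) ∧
  (∀ x ∈ Set.Icc 1 k, ∀ y ∈ Set.Icc 1 k, u x ≠ v y) ∧
  (∀ x ∈ Set.Icc 1 k, ∃ i, Mrel τ i (u x) (v x)) ∧
  (∀ x ∈ Set.Icc 1 k, ∃ j, OmegaE Ω τ j (v x) (u (cyc k x))) ∧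
  (∀ x ∈ Set.Icc 1 k, ∀ y ∈ Set.Icc 1 k, x ≠ y → ∀ i,
     Mrel τ i (u x) (v x) → ¬ Mrel τ i (u y) (v y)) ∧
  (∀ x ∈ Set.Icc 1 k, ∀ y ∈ Set.Icc 1 k, x ≠ y → ∀ j,
     OmegaE Ω τ j (v x) (u (cyc k x)) → ¬ OmegaE Ω τ j (v y) (u (cyc k y)))

/-- A canonical k-nice cycle: a k-nice cycle whose processor edges are in M(τ,x) and
whose location edges are in Ω^e(τ,x⊕1), for x = 1,…,k. -/
def CanonicalNiceCycle (Ω : MTrace → ℕ → ℕ → ℕ → Prop) (τ : MTrace) (k : ℕ)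
    (u v : ℕ → ℕ) : Prop :=
  NiceCycle Ω τ k u v ∧
  (∀ x ∈ Set.Icc 1 k, Mrel τ x (u x) (v x)) ∧
  (∀ x ∈ Set.Icc 1 k, OmegaE Ω τ (cyc k x) (v x) (u (cyc k x)))

/-- The trace satisfies the automaton Constrain_k(j). -/
def ConstrainK (k j : ℕ) (τ : MTrace) : Prop :=
  (j ≤ k →
    (∀ x ∈ Lw τ j, (ev τ x).data ≤ 2) ∧
    (∀ x ∈ Lw τ j, ∀ y ∈ Lw τ j, (ev τ x).data = 1 → (ev τ y).data = 1 → x = y) ∧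
    (∀ x ∈ Lw τ j, ∀ y ∈ Lw τ j, (ev τ x).data = 0 → (ev τ y).data ≠ 0 → x < y) ∧
    (∀ y ∈ Lw τ j, (ev τ y).data = 2 → ∃ x ∈ Lw τ j, (ev τ x).data = 1 ∧ x < y)) ∧
  (k < j → ∀ x ∈ Lw τ j, (ev τ x).data = 0)

/-- The trace satisfies the automaton Check_k(i). -/
def CheckK (k i : ℕ) (τ : MTrace) : Prop :=
  ∃ x ∈ Dom τ, ∃ y ∈ Dom τ, x < y ∧
    (ev τ x).proc = i ∧ (ev τ x).loc = i ∧
    ((ev τ x).data = 1 ∨ (ev τ x).data = 2) ∧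
    (ev τ y).proc = i ∧ (ev τ y).loc = cyc k i ∧
    ((ev τ y).data = 0 ∨ ((ev τ y).op = MemOp.W ∧ (ev τ y).data = 1))

section Helpers

lemma mem_dom_iff {τ : MTrace} {x : ℕ} : x ∈ Dom τ ↔ 1 ≤ x ∧ x ≤ τ.length := Iff.rfl

lemma ev_map (h : MemEvent → MemEvent) (τ : MTrace) {x : ℕ} (hx : x ∈ Dom τ) :
    ev (τ.map h) x = h (ev τ x) := by
  obtain ⟨h1, h2⟩ := hx
  have hlt : x - 1 < τ.length := by omega
  simp [ev, List.getD_eq_getElem?_getD, List.getElem?_eq_getElem, hlt, List.getElem_map]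

lemma mrel_dom {τ : MTrace} {i x y : ℕ} (h : Mrel τ i x y) : x ∈ Dom τ ∧ y ∈ Dom τ :=
  ⟨h.1.1, h.2.1.1⟩

lemma omegaE_dom {Ω τ j x y} (h : OmegaE Ω τ j x y) : x ∈ Dom τ ∧ y ∈ Dom τ :=
  ⟨h.1.1, h.2.1.1⟩

lemma gedge_dom {Ω τ x y} (h : GEdge Ω τ x y) : x ∈ Dom τ ∧ y ∈ Dom τ := by
  rcases h with ⟨i, h⟩ | ⟨j, h⟩
  · exact mrel_dom h
  · exact omegaE_dom h

lemma ev_mem {τ : MTrace} {x : ℕ} (hx : x ∈ Dom τ) : ev τ x ∈ τ := by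
  obtain ⟨h1, h2⟩ := hx
  have hlt : x - 1 < τ.length := by omega
  simp only [ev, List.getD_eq_getElem?_getD, List.getElem?_eq_getElem, hlt]
  exact List.getElem_mem _

lemma dom_map (h : MemEvent → MemEvent) (τ : MTrace) : Dom (τ.map h) = Dom τ := by
  simp [Dom]

lemma cyc_mem {k x : ℕ} (hx : x ∈ Set.Icc 1 k) : cyc k x ∈ Set.Icc 1 k := by
  simp only [Set.mem_Icc] at *
  unfold cyc; split <;> omega

lemma cyc_inj {k : ℕ} {x y : ℕ} (hx : x ∈ Set.Icc 1 k) (hy : y ∈ Set.Icc 1 k)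
    (h : cyc k x = cyc k y) : x = y := by
  simp only [Set.mem_Icc] at hx hy
  unfold cyc at h; split at h <;> split at h <;> omega


end Helpers







section CycleSupport
open Classical

/-- Unique write with a given data value. -/
lemma write_unique {τ : MTrace} (hU : Unambiguous τ) {j w1 w2 : ℕ}
    (h1 : w1 ∈ Lw τ j) (h2 : w2 ∈ Lw τ j) (hd : (ev τ w1).data = (ev τ w2).data) :
    w1 = w2 := by
  by_contra hne
  exact (hU j w2 h2).2 w1 h1 hne hd

/-- Rank of an event at location j: the unique write with its data value, or 0. -/
noncomputable def Rk (τ : MTrace) (j x : ℕ) : ℕ :=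
  if h : ∃ w, w ∈ Lw τ j ∧ (ev τ w).data = (ev τ x).data ∧ (ev τ x).data ≠ 0
  then h.choose else 0

lemma Rk_zero {τ : MTrace} {j x : ℕ} (h : (ev τ x).data = 0) : Rk τ j x = 0 := by
  rw [Rk, dif_neg]
  rintro ⟨w, _, _, hne⟩
  exact hne h

lemma Rk_spec {τ : MTrace} (hCa : Causal τ) {j x : ℕ} (hx : x ∈ Lset τ j)
    (hd : (ev τ x).data ≠ 0) :
    Rk τ j x ∈ Lw τ j ∧ (ev τ (Rk τ j x)).data = (ev τ x).data := by
  have hex : ∃ w, w ∈ Lw τ j ∧ (ev τ w).data = (ev τ x).data ∧ (ev τ x).data ≠ 0 := by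
    cases hop : (ev τ x).op with
    | W => exact ⟨x, ⟨hx, hop⟩, rfl, hd⟩
    | R =>
      rcases hCa j x ⟨hx, hop⟩ with h0 | ⟨w, hw, hwd⟩
      · exact absurd h0 hd
      · exact ⟨w, hw, hwd, hd⟩
  rw [Rk, dif_pos hex]
  exact ⟨hex.choose_spec.1, hex.choose_spec.2.1⟩

lemma Rk_pos {τ : MTrace} (hCa : Causal τ) {j x : ℕ} (hx : x ∈ Lset τ j)
    (hd : (ev τ x).data ≠ 0) : Rk τ j x ≠ 0 := by
  have := (Rk_spec hCa hx hd).1.1.1.1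
  omega

lemma Rk_write {τ : MTrace} (hU : Unambiguous τ) (hCa : Causal τ) {j x : ℕ}
    (hx : x ∈ Lw τ j) : Rk τ j x = x := by
  have hd : (ev τ x).data ≠ 0 := (hU j x hx).1
  have h := Rk_spec hCa hx.1 hd
  exact write_unique hU h.1 hx h.2

/-- Characterization of the extended witness relation for a simple witness,
on an unambiguous causal trace. -/
lemma omegaE_iff {Ω : MTrace → ℕ → ℕ → ℕ → Prop} {τ : MTrace}
    (hsimp : IsSimple Ω) (hU : Unambiguous τ) (hCa : Causal τ)
    {j x y : ℕ} (hx : x ∈ Lset τ j) (hy : y ∈ Lset τ j) :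
    OmegaE Ω τ j x y ↔
      (Rk τ j x < Rk τ j y ∨
       (Rk τ j x = Rk τ j y ∧ Rk τ j x ≠ 0 ∧
        (ev τ x).op = MemOp.W ∧ (ev τ y).op = MemOp.R)) := by
  constructor
  · rintro ⟨_, _, ⟨hd, hopx, hopy⟩ | ⟨hdx, hdy⟩ | ⟨a, b, ha, hb, hab, hda, hdb⟩⟩
    · -- same data, write → read
      have hxw : x ∈ Lw τ j := ⟨hx, hopx⟩
      have hdx : (ev τ x).data ≠ 0 := (hU j x hxw).1
      have hrx : Rk τ j x = x := Rk_write hU hCa hxw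
      have hdy : (ev τ y).data ≠ 0 := by rw [← hd]; exact hdx
      have hry := Rk_spec hCa hy hdy
      have : Rk τ j y = x := write_unique hU hry.1 hxw (by rw [hry.2, ← hd])
      right
      refine ⟨by rw [hrx, this], by rw [hrx]; have := hxw.1.1.1; omega, hopx, hopy⟩
    · left
      rw [Rk_zero hdx]
      have := (Rk_spec hCa hy hdy).1.1.1.1
      omega
    · -- via witness order on writes
      have hlt : a < b := ((hsimp τ j a b).mp hab).2.2
      have hdax : (ev τ x).data ≠ 0 := by rw [← hda]; exact (hU j a ha).1
      have hdby : (ev τ y).data ≠ 0 := by rw [← hdb]; exact (hU j b hb).1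
      have hrx := Rk_spec hCa hx hdax
      have hry := Rk_spec hCa hy hdby
      have hxa : Rk τ j x = a := write_unique hU hrx.1 ha (by rw [hrx.2, ← hda])
      have hyb : Rk τ j y = b := write_unique hU hry.1 hb (by rw [hry.2, ← hdb])
      left; rw [hxa, hyb]; exact hlt
  · rintro (hlt | ⟨heq, hne, hopx, hopy⟩)
    · by_cases hdy : (ev τ y).data = 0
      · rw [Rk_zero hdy] at hlt; omega
      by_cases hdx : (ev τ x).data = 0
      · exact ⟨hx, hy, Or.inr (Or.inl ⟨hdx, hdy⟩)⟩
      · have hrx := Rk_spec hCa hx hdx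
        have hry := Rk_spec hCa hy hdy
        refine ⟨hx, hy, Or.inr (Or.inr ⟨Rk τ j x, Rk τ j y, hrx.1, hry.1, ?_, hrx.2, hry.2⟩)⟩
        exact (hsimp τ j _ _).mpr ⟨hrx.1, hry.1, hlt⟩
    · have hdx : (ev τ x).data ≠ 0 := by
        intro h0; exact hne (Rk_zero h0)
      have hdy : (ev τ y).data ≠ 0 := by
        intro h0; rw [heq, Rk_zero h0] at hne; exact hne rfl
      have hxw : x ∈ Lw τ j := ⟨hx, hopx⟩
      have hrx : Rk τ j x = x := Rk_write hU hCa hxw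
      have hry := Rk_spec hCa hy hdy
      have : (ev τ x).data = (ev τ y).data := by
        rw [← hry.2, ← heq, hrx]
      exact ⟨hx, hy, Or.inl ⟨this, hopx, hopy⟩⟩

lemma omegaE_irrefl {Ω : MTrace → ℕ → ℕ → ℕ → Prop} {τ : MTrace}
    (hsimp : IsSimple Ω) (hU : Unambiguous τ) (hCa : Causal τ)
    {j x : ℕ} : ¬ OmegaE Ω τ j x x := by
  intro h
  rcases (omegaE_iff hsimp hU hCa h.1 h.1).mp h with hlt | ⟨_, _, hW, hR⟩
  · omega
  · rw [hW] at hR; cases hR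

lemma omegaE_trans {Ω : MTrace → ℕ → ℕ → ℕ → Prop} {τ : MTrace}
    (hsimp : IsSimple Ω) (hU : Unambiguous τ) (hCa : Causal τ)
    {j x y z : ℕ} (h1 : OmegaE Ω τ j x y) (h2 : OmegaE Ω τ j y z) :
    OmegaE Ω τ j x z := by
  have hx := h1.1; have hy := h1.2.1; have hz := h2.2.1
  rw [omegaE_iff hsimp hU hCa hx hy] at h1
  rw [omegaE_iff hsimp hU hCa hy hz] at h2
  rw [omegaE_iff hsimp hU hCa hx hz]
  rcases h1 with h1 | ⟨e1, n1, w1, r1⟩ <;> rcases h2 with h2 | ⟨e2, n2, w2, r2⟩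
  · left; omega
  · left; omega
  · left; omega
  · rw [r1] at w2; cases w2

/-- A cycle in the constraint graph, as a periodic function. -/
def IsCyc (Ω : MTrace → ℕ → ℕ → ℕ → Prop) (τ : MTrace) (t : ℕ) (c : ℕ → ℕ) : Prop :=
  1 ≤ t ∧ (∀ i, c (i + t) = c i) ∧ (∀ i, GEdge Ω τ (c i) (c (i + 1)))

lemma modsucc (i s : ℕ) (hs : 1 ≤ s) :
    (i + 1) % s = if i % s + 1 = s then 0 else i % s + 1 := by
  have h1 : (i + 1) % s = (i % s + 1 % s) % s := by rw [Nat.add_mod]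
  rcases Nat.eq_or_lt_of_le hs with h | h
  · simp [← h, Nat.mod_one]
  · rw [h1, Nat.mod_eq_of_lt h]
    have hr : i % s < s := Nat.mod_lt _ (by omega)
    by_cases he : i % s + 1 = s
    · rw [if_pos he, he, Nat.mod_self]
    · rw [if_neg he, Nat.mod_eq_of_lt (by omega)]

lemma mod_lt' (k s : ℕ) (hs : 1 ≤ s) : k % s < s := Nat.mod_lt _ (by omega)

/-- Cycle surgery: a chord spanning distance d produces a shorter cycle. -/
lemma surgery {Ω : MTrace → ℕ → ℕ → ℕ → Prop} {τ : MTrace} {t : ℕ} {c : ℕ → ℕ}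
    (hcyc : IsCyc Ω τ t c) {a d : ℕ} (hd2 : 2 ≤ d) (hdt : d ≤ t)
    (hchord : GEdge Ω τ (c a) (c (a + d))) : ∃ c', IsCyc Ω τ (t - d + 1) c' := by
  obtain ⟨ht, hper, hedge⟩ := hcyc
  set t' := t - d + 1 with ht'
  have ht'1 : 1 ≤ t' := by omega
  refine ⟨fun k => if k % t' = 0 then c a else c (a + d + k % t' - 1), ht'1, ?_, ?_⟩
  · intro i
    simp only [Nat.add_mod_right]
  · intro k
    have hr : k % t' < t' := mod_lt' k t' ht'1
    have hsucc := modsucc k t' ht'1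
    simp only []
    by_cases h0 : k % t' = 0
    · rw [if_pos h0]
      by_cases h1 : t' = 1
      · have hk1 : (k + 1) % t' = 0 := by rw [h1, Nat.mod_one]
        rw [if_pos hk1]
        have hdt' : d = t := by omega
        rw [hdt', hper a] at hchord
        exact hchord
      · have hk1 : (k + 1) % t' = 1 := by
          rw [hsucc, h0, if_neg (show ¬ (0 + 1 = t') by omega)]
        rw [if_neg (show ¬ ((k + 1) % t' = 0) by omega), hk1]
        have he : a + d + 1 - 1 = a + d := by omega
        rw [he]
        exact hchord
    · rw [if_neg h0]
      by_cases hlast : k % t' + 1 = t'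
      · have hk1 : (k + 1) % t' = 0 := by rw [hsucc, if_pos hlast]
        rw [if_pos hk1]
        have he : a + d + k % t' - 1 + 1 = a + t := by omega
        have hh := hedge (a + d + k % t' - 1)
        rw [he, hper a] at hh
        exact hh
      · have hk1 : (k + 1) % t' = k % t' + 1 := by rw [hsucc, if_neg hlast]
        rw [if_neg (show ¬ ((k + 1) % t' = 0) by omega), hk1]
        have he : a + d + (k % t' + 1) - 1 = (a + d + k % t' - 1) + 1 := by omega
        rw [he]
        exact hedge (a + d + k % t' - 1)

/-- From a cycle in the transitive closure, a periodic cycle function. -/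
lemma cyc_of_hasCycle {Ω : MTrace → ℕ → ℕ → ℕ → Prop} {τ : MTrace}
    (h : HasCycle Ω τ) : ∃ t c, IsCyc Ω τ t c := by
  obtain ⟨x, htg⟩ := h
  have hpath : ∀ {y : ℕ}, Relation.TransGen (GEdge Ω τ) x y →
      ∃ (s : ℕ) (p : ℕ → ℕ), 1 ≤ s ∧ p 0 = x ∧ p s = y ∧ ∀ i < s, GEdge Ω τ (p i) (p (i + 1)) := by
    intro y hy
    induction hy with
    | @single b h =>
      refine ⟨1, fun i => if i = 0 then x else b, le_refl 1, ?_, ?_, ?_⟩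
      · beta_reduce; rw [if_pos rfl]
      · beta_reduce; rw [if_neg one_ne_zero]
      intro i hi
      have hi0 : i = 0 := by omega
      subst hi0
      simp only [if_pos rfl, if_neg one_ne_zero]
      exact h
    | @tail b c' htg hlast ih =>
      obtain ⟨s, p, hs, hp0, hps, hedge⟩ := ih
      refine ⟨s + 1, fun i => if i = s + 1 then c' else p i, by omega, ?_, by beta_reduce; rw [if_pos rfl], ?_⟩
      · beta_reduce; rw [if_neg (show ¬ (0 = s + 1) by omega)]; exact hp0
      · intro i hi
        beta_reduce
        by_cases h : i = s
        · rw [if_neg (show ¬ (i = s + 1) by omega), if_pos (show i + 1 = s + 1 by omega)]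
          rw [h, hps]
          exact hlast
        · rw [if_neg (show ¬ (i = s + 1) by omega), if_neg (show ¬ (i + 1 = s + 1) by omega)]
          exact hedge i (by omega)
  obtain ⟨s, p, hs, hp0, hps, hedge⟩ := hpath htg
  refine ⟨s, fun i => p (i % s), hs, ?_, ?_⟩
  · intro i; simp only [Nat.add_mod_right]
  · intro i
    have hr : i % s < s := mod_lt' i s hs
    beta_reduce
    rw [modsucc i s hs]
    by_cases h : i % s + 1 = s
    · rw [if_pos h]
      have h2 : p 0 = p (i % s + 1) := by rw [hp0, h, hps]
      rw [h2]
      exact hedge _ hr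
    · rw [if_neg h]
      exact hedge _ hr

end CycleSupport
section CyclePart

lemma le_of_inj (k n : ℕ) (f : ℕ → ℕ)
    (hran : ∀ x, 1 ≤ x → x ≤ k → 1 ≤ f x ∧ f x ≤ n)
    (hinj : ∀ x y, 1 ≤ x → x ≤ k → 1 ≤ y → y ≤ k → x ≠ y → f x ≠ f y) : k ≤ n := by
  classical
  have h := Finset.card_le_card_of_injOn f (s := Finset.Icc 1 k) (t := Finset.Icc 1 n)
    (fun x hx => by
      simp only [Finset.coe_Icc, Set.mem_Icc] at *
      exact hran x hx.1 hx.2)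
    (fun x hx y hy heq => by
      by_contra hne
      simp only [Finset.coe_Icc, Set.mem_Icc] at hx hy
      exact hinj x y hx.1 hx.2 hy.1 hy.2 hne heq)
  simpa [Nat.card_Icc] using h

/-- If the constraint graph of an unambiguous causal trace has a cycle, then (with a simple
witness) it has a nice cycle in "indexed" form, with distinct processors and locations. -/
theorem cycle_to_nice (Ω : MTrace → ℕ → ℕ → ℕ → Prop) (τ : MTrace) (n m : ℕ)
    (hsimp : IsSimple Ω) (hU : Unambiguous τ) (hCa : Causal τ) (hIR : InRange n m τ)
    (hcyc : HasCycle Ω τ) :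
    ∃ (k : ℕ) (u v p l : ℕ → ℕ), 1 ≤ k ∧ k ≤ min n m ∧ NiceCycle Ω τ k u v ∧
      (∀ x ∈ Set.Icc 1 k, Mrel τ (p x) (u x) (v x)) ∧
      (∀ x ∈ Set.Icc 1 k, OmegaE Ω τ (l x) (v x) (u (cyc k x))) ∧
      (∀ x ∈ Set.Icc 1 k, ∀ y ∈ Set.Icc 1 k, x ≠ y → p x ≠ p y) ∧
      (∀ x ∈ Set.Icc 1 k, ∀ y ∈ Set.Icc 1 k, x ≠ y → l x ≠ l y) ∧
      (∀ x ∈ Set.Icc 1 k, p x ∈ Set.Icc 1 n) ∧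
      (∀ x ∈ Set.Icc 1 k, l x ∈ Set.Icc 1 m) := by
  classical
  have hex : ∃ t, ∃ c, IsCyc Ω τ t c := cyc_of_hasCycle hcyc
  obtain ⟨t, ⟨c, hcy⟩, hmin⟩ :
      ∃ t, (∃ c, IsCyc Ω τ t c) ∧ ∀ t' < t, ¬ ∃ c', IsCyc Ω τ t' c' :=
    ⟨Nat.find hex, Nat.find_spec hex, fun t' h => Nat.find_min hex h⟩
  obtain ⟨ht1, hper, hedge⟩ := hcy
  have hnoself : ∀ z, ¬ GEdge Ω τ z z := by
    rintro z (⟨i, hm⟩ | ⟨j, ho⟩)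
    · exact absurd hm.2.2 (lt_irrefl z)
    · exact omegaE_irrefl hsimp hU hCa ho
  have ht2 : 2 ≤ t := by
    by_contra h
    have he := hedge 0
    rw [show (0:ℕ) + 1 = 0 + t by omega, hper 0] at he
    exact hnoself _ he
  have hckill : ∀ s1 s2, s1 < s2 → s2 < s1 + t → 2 ≤ s2 - s1 →
      GEdge Ω τ (c s1) (c s2) → False := by
    intro s1 s2 h1 h2 h3 hch
    rw [show s2 = s1 + (s2 - s1) by omega] at hch
    obtain ⟨c', hc'⟩ := surgery ⟨ht1, hper, hedge⟩ h3 (by omega) hch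
    exact hmin _ (by omega) ⟨c', hc'⟩
  have hwin : ∀ i j, i < j → j < i + t → c i ≠ c j := by
    intro i j h1 h2 heq
    have hd1 : 1 ≤ j - i := by omega
    refine hmin (j - i) (by omega) ⟨fun k => c (i + k % (j - i)), hd1, ?_, ?_⟩
    · intro k; simp only [Nat.add_mod_right]
    · intro k
      have hr : k % (j - i) < j - i := mod_lt' k (j - i) hd1
      beta_reduce
      rw [modsucc k (j - i) hd1]
      by_cases h : k % (j - i) + 1 = j - i
      · rw [if_pos h]
        have e2 : c (i + 0) = c (i + k % (j - i) + 1) := by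
          rw [show i + k % (j - i) + 1 = j by omega, show i + 0 = i by omega]
          exact heq
        rw [e2]
        exact hedge (i + k % (j - i))
      · rw [if_neg h]
        rw [show i + (k % (j - i) + 1) = (i + k % (j - i)) + 1 by omega]
        exact hedge (i + k % (j - i))
  -- edge labels
  have hMO' : ∀ i, (¬ ∃ p, Mrel τ p (c i) (c (i + 1))) →
      ∃ j, OmegaE Ω τ j (c i) (c (i + 1)) := by
    intro i h; rcases hedge i with hM | hO
    · exact absurd hM h
    · exact hO
  have hnoMM : ∀ i, (∃ p, Mrel τ p (c i) (c (i + 1))) →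
      (∃ p, Mrel τ p (c (i + 1)) (c (i + 1 + 1))) → False := by
    rintro i ⟨p1, h1⟩ ⟨p2, h2⟩
    have hp12 : p1 = p2 := by rw [← h1.2.1.2, ← h2.1.2]
    rw [← hp12] at h2
    rw [show i + 1 + 1 = i + 2 by omega] at h2
    have hcomp : Mrel τ p1 (c i) (c (i + 2)) := ⟨h1.1, h2.2.1, lt_trans h1.2.2 h2.2.2⟩
    by_cases ht2' : t = 2
    · rw [show i + 2 = i + t by omega, hper i] at hcomp
      exact absurd hcomp.2.2 (lt_irrefl _)
    · exact hckill i (i + 2) (by omega) (by omega) (by omega) (Or.inl ⟨p1, hcomp⟩)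
  have hnoOO : ∀ i, (¬ ∃ p, Mrel τ p (c i) (c (i + 1))) →
      (¬ ∃ p, Mrel τ p (c (i + 1)) (c (i + 1 + 1))) → False := by
    intro i h1 h2
    obtain ⟨j1, hO1⟩ := hMO' i h1
    obtain ⟨j2, hO2⟩ := hMO' (i + 1) h2
    have hj : j2 = j1 := by rw [← hO1.2.1.2, ← hO2.1.2]
    rw [hj, show i + 1 + 1 = i + 2 by omega] at hO2
    have hcomp := omegaE_trans hsimp hU hCa hO1 hO2
    by_cases ht2' : t = 2
    · rw [show i + 2 = i + t by omega, hper i] at hcomp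
      exact omegaE_irrefl hsimp hU hCa hcomp
    · exact hckill i (i + 2) (by omega) (by omega) (by omega) (Or.inr ⟨j1, hcomp⟩)
  have halt : ∀ i, (∃ p, Mrel τ p (c (i + 1)) (c (i + 1 + 1))) ↔
      ¬ ∃ p, Mrel τ p (c i) (c (i + 1)) := by
    intro i
    constructor
    · intro h2 h1; exact hnoMM i h1 h2
    · intro h1; by_contra h2; exact hnoOO i h1 h2
  have hlabper : ∀ i, (∃ p, Mrel τ p (c (i + t)) (c (i + t + 1))) ↔
      ∃ p, Mrel τ p (c i) (c (i + 1)) := by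
    intro i
    rw [hper i, show i + t + 1 = (i + 1) + t by omega, hper (i + 1)]
  have hpar : ∀ s i, (∃ p, Mrel τ p (c (i + 2 * s)) (c (i + 2 * s + 1))) ↔
      ∃ p, Mrel τ p (c i) (c (i + 1)) := by
    intro s
    induction s with
    | zero => intro i; rw [show i + 2 * 0 = i by omega]
    | succ s ih =>
      intro i
      rw [show i + 2 * (s + 1) = (i + 2 * s + 1) + 1 by omega]
      rw [show (i + 2 * s + 1) + 1 + 1 = ((i + 2 * s + 1) + 1) + 1 by omega]
      rw [halt (i + 2 * s + 1)]
      rw [show (i + 2 * s + 1) + 1 = (i + 2 * s) + 1 + 1 by omega]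
      rw [halt (i + 2 * s)]
      rw [not_not]
      exact ih i
  obtain ⟨k, hk⟩ : ∃ k, t = 2 * k := by
    rcases Nat.even_or_odd t with ⟨k, hk⟩ | ⟨k, hk⟩
    · exact ⟨k, by omega⟩
    · exfalso
      have hodd := halt (0 + 2 * k)
      have hpar0 := hpar k 0
      have hper0 := hlabper 0
      rw [show 0 + t = 0 + 2 * k + 1 by omega] at hper0
      by_cases h : ∃ p, Mrel τ p (c 0) (c (0 + 1))
      · exact (hodd.mp (hper0.mpr h)) (hpar0.mpr h)
      · exact h (hper0.mp (hodd.mpr (fun hc => h (hpar0.mp hc))))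
  have hk1 : 1 ≤ k := by omega
  -- choose the offset so that edge `off` is an M edge
  obtain ⟨off, hoffM⟩ : ∃ off, ∃ p, Mrel τ p (c off) (c (off + 1)) := by
    by_cases h : ∃ p, Mrel τ p (c 0) (c (0 + 1))
    · exact ⟨0, by rwa [show (0:ℕ) + 1 = 0 + 1 by rfl]⟩
    · refine ⟨0 + 1, ?_⟩
      rw [halt 0]
      exact h
  have hMat : ∀ s, ∃ p, Mrel τ p (c (off + 2 * s)) (c (off + 2 * s + 1)) :=
    fun s => (hpar s off).mpr hoffM
  have hOat : ∀ s, ∃ j, OmegaE Ω τ j (c (off + 2 * s + 1)) (c (off + 2 * s + 2)) := by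
    intro s
    have h1 : ¬ ∃ p, Mrel τ p (c (off + 2 * s + 1)) (c (off + 2 * s + 1 + 1)) := by
      rw [halt (off + 2 * s)]
      exact not_not_intro (hMat s)
    obtain ⟨j, hO⟩ := hMO' _ h1
    rw [show off + 2 * s + 1 + 1 = off + 2 * s + 2 by omega] at hO
    exact ⟨j, hO⟩
  have hMsp : ∀ s, Mrel τ ((hMat s).choose) (c (off + 2 * s)) (c (off + 2 * s + 1)) :=
    fun s => (hMat s).choose_spec
  have hOsp : ∀ s, OmegaE Ω τ ((hOat s).choose) (c (off + 2 * s + 1)) (c (off + 2 * s + 2)) :=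
    fun s => (hOat s).choose_spec
  -- target of the Ω edge x is u (cyc k x)
  have hnext : ∀ x, 1 ≤ x → x ≤ k →
      c (off + 2 * (x - 1) + 2) = c (off + 2 * (cyc k x - 1)) := by
    intro x hx1 hxk
    by_cases hxe : x = k
    · have hcyc1 : cyc k x = 1 := by unfold cyc; rw [if_pos hxe]
      rw [hcyc1, show off + 2 * (x - 1) + 2 = off + t by omega,
          hper off, show off + 2 * (1 - 1) = off by omega]
    · have hcycx : cyc k x = x + 1 := by unfold cyc; rw [if_neg hxe]
      rw [hcycx, show off + 2 * (x + 1 - 1) = off + 2 * (x - 1) + 2 by omega]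
  -- distinctness of the chosen vertices
  have hdistinct : ∀ a b, a < b → b ≤ t - 1 → c (off + a) ≠ c (off + b) := by
    intro a b hab hb
    exact hwin (off + a) (off + b) (by omega) (by omega)
  -- no two M edges share a processor
  have hnoMM2 : ∀ x, 1 ≤ x → x ≤ k → ∀ y, 1 ≤ y → y ≤ k → x ≠ y → ∀ i,
      Mrel τ i (c (off + 2 * (x - 1))) (c (off + 2 * (x - 1) + 1)) →
      Mrel τ i (c (off + 2 * (y - 1))) (c (off + 2 * (y - 1) + 1)) → False := by
    intro x hx1 hxk y hy1 hyk hxy i h1 h2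
    by_cases hlt : c (off + 2 * (x - 1)) < c (off + 2 * (y - 1) + 1)
    · have hch : GEdge Ω τ (c (off + 2 * (x - 1))) (c (off + 2 * (y - 1) + 1)) :=
        Or.inl ⟨i, h1.1, h2.2.1, hlt⟩
      rcases Nat.lt_or_ge x y with h' | h'
      · exact hckill (off + 2 * (x - 1)) (off + 2 * (y - 1) + 1)
          (by omega) (by omega) (by omega) hch
      · have hch' : GEdge Ω τ (c (off + 2 * (x - 1))) (c (off + 2 * (y - 1) + 1 + t)) := by
          rw [hper]; exact hch
        exact hckill (off + 2 * (x - 1)) (off + 2 * (y - 1) + 1 + t)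
          (by omega) (by omega) (by omega) hch'
    · have hne : c (off + 2 * (y - 1) + 1) ≠ c (off + 2 * (x - 1)) := by
        rcases Nat.lt_or_ge y x with h' | h'
        · exact hdistinct (2 * (y - 1) + 1) (2 * (x - 1)) (by omega) (by omega)
        · exact (hdistinct (2 * (x - 1)) (2 * (y - 1) + 1) (by omega) (by omega)).symm
      have ha := h1.2.2
      have hb := h2.2.2
      have hlt2 : c (off + 2 * (y - 1)) < c (off + 2 * (x - 1) + 1) := by omega
      have hch : GEdge Ω τ (c (off + 2 * (y - 1))) (c (off + 2 * (x - 1) + 1)) :=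
        Or.inl ⟨i, h2.1, h1.2.1, hlt2⟩
      rcases Nat.lt_or_ge y x with h' | h'
      · exact hckill (off + 2 * (y - 1)) (off + 2 * (x - 1) + 1)
          (by omega) (by omega) (by omega) hch
      · have hch' : GEdge Ω τ (c (off + 2 * (y - 1))) (c (off + 2 * (x - 1) + 1 + t)) := by
          rw [hper]; exact hch
        exact hckill (off + 2 * (y - 1)) (off + 2 * (x - 1) + 1 + t)
          (by omega) (by omega) (by omega) hch'
  -- no two Ω edges share a location
  have hnoOO2 : ∀ x, 1 ≤ x → x ≤ k → ∀ y, 1 ≤ y → y ≤ k → x ≠ y → ∀ j,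
      OmegaE Ω τ j (c (off + 2 * (x - 1) + 1)) (c (off + 2 * (x - 1) + 2)) →
      OmegaE Ω τ j (c (off + 2 * (y - 1) + 1)) (c (off + 2 * (y - 1) + 2)) → False := by
    intro x hx1 hxk y hy1 hyk hxy j h1 h2
    have hkill : ∀ a b, 1 ≤ a → a ≤ k → 1 ≤ b → b ≤ k → a ≠ b →
        OmegaE Ω τ j (c (off + 2 * (a - 1) + 1)) (c (off + 2 * (b - 1) + 2)) → False := by
      intro a b ha1 hak hb1 hbk hab hch
      rcases Nat.lt_or_ge a b with h' | h'
      · exact hckill (off + 2 * (a - 1) + 1) (off + 2 * (b - 1) + 2)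
          (by omega) (by omega) (by omega) (Or.inr ⟨j, hch⟩)
      · have hch' : GEdge Ω τ (c (off + 2 * (a - 1) + 1)) (c (off + 2 * (b - 1) + 2 + t)) := by
          rw [hper]; exact Or.inr ⟨j, hch⟩
        exact hckill (off + 2 * (a - 1) + 1) (off + 2 * (b - 1) + 2 + t)
          (by omega) (by omega) (by omega) hch'
    have l1 := (omegaE_iff hsimp hU hCa h1.1 h1.2.1).mp h1
    have l2 := (omegaE_iff hsimp hU hCa h2.1 h2.2.1).mp h2
    have nc1 : ¬ (Rk τ j (c (off + 2 * (x - 1) + 1)) < Rk τ j (c (off + 2 * (y - 1) + 2)) ∨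
        (Rk τ j (c (off + 2 * (x - 1) + 1)) = Rk τ j (c (off + 2 * (y - 1) + 2)) ∧
         Rk τ j (c (off + 2 * (x - 1) + 1)) ≠ 0 ∧
         (ev τ (c (off + 2 * (x - 1) + 1))).op = MemOp.W ∧
         (ev τ (c (off + 2 * (y - 1) + 2))).op = MemOp.R)) := by
      intro h
      exact hkill x y hx1 hxk hy1 hyk hxy ((omegaE_iff hsimp hU hCa h1.1 h2.2.1).mpr h)
    have nc2 : ¬ (Rk τ j (c (off + 2 * (y - 1) + 1)) < Rk τ j (c (off + 2 * (x - 1) + 2)) ∨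
        (Rk τ j (c (off + 2 * (y - 1) + 1)) = Rk τ j (c (off + 2 * (x - 1) + 2)) ∧
         Rk τ j (c (off + 2 * (y - 1) + 1)) ≠ 0 ∧
         (ev τ (c (off + 2 * (y - 1) + 1))).op = MemOp.W ∧
         (ev τ (c (off + 2 * (x - 1) + 2))).op = MemOp.R)) := by
      intro h
      exact hkill y x hy1 hyk hx1 hxk (Ne.symm hxy) ((omegaE_iff hsimp hU hCa h2.1 h1.2.1).mpr h)
    have hAD : ¬ Rk τ j (c (off + 2 * (x - 1) + 1)) < Rk τ j (c (off + 2 * (y - 1) + 2)) :=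
      fun h => nc1 (Or.inl h)
    have hCB : ¬ Rk τ j (c (off + 2 * (y - 1) + 1)) < Rk τ j (c (off + 2 * (x - 1) + 2)) :=
      fun h => nc2 (Or.inl h)
    rcases l1 with l1 | ⟨e1, n1, w1, r1⟩
    · rcases l2 with l2 | ⟨e2, n2, w2, r2⟩
      · omega
      · omega
    rcases l2 with l2 | ⟨e2, n2, w2, r2⟩
    · omega
    exact nc1 (Or.inr ⟨by omega, n1, w1, r2⟩)
  -- processors and locations are in range
  have hproc : ∀ x, 1 ≤ x → x ≤ k → 1 ≤ (hMat (x - 1)).choose ∧ (hMat (x - 1)).choose ≤ n := by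
    intro x _ _
    have h := hMsp (x - 1)
    have hd := h.1.1
    have := hIR _ (ev_mem hd)
    rw [h.1.2] at this
    exact ⟨this.1, this.2.1⟩
  have hloc : ∀ x, 1 ≤ x → x ≤ k → 1 ≤ (hOat (x - 1)).choose ∧ (hOat (x - 1)).choose ≤ m := by
    intro x _ _
    have h := hOsp (x - 1)
    have hd := h.1.1
    have := hIR _ (ev_mem hd)
    rw [h.1.2] at this
    exact ⟨this.2.2.1, this.2.2.2⟩
  have hpinj : ∀ x, 1 ≤ x → x ≤ k → ∀ y, 1 ≤ y → y ≤ k → x ≠ y →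
      (hMat (x - 1)).choose ≠ (hMat (y - 1)).choose := by
    intro x hx1 hxk y hy1 hyk hxy heq
    have h2 := hMsp (y - 1)
    rw [← heq] at h2
    exact hnoMM2 x hx1 hxk y hy1 hyk hxy _ (hMsp (x - 1)) h2
  have hlinj : ∀ x, 1 ≤ x → x ≤ k → ∀ y, 1 ≤ y → y ≤ k → x ≠ y →
      (hOat (x - 1)).choose ≠ (hOat (y - 1)).choose := by
    intro x hx1 hxk y hy1 hyk hxy heq
    have h2 := hOsp (y - 1)
    rw [← heq] at h2
    exact hnoOO2 x hx1 hxk y hy1 hyk hxy _ (hOsp (x - 1)) h2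
  have hkn : k ≤ n := le_of_inj k n (fun x => (hMat (x - 1)).choose) hproc (fun x y hx1 hxk hy1 hyk => hpinj x hx1 hxk y hy1 hyk)
  have hkm : k ≤ m := le_of_inj k m (fun x => (hOat (x - 1)).choose) hloc (fun x y hx1 hxk hy1 hyk => hlinj x hx1 hxk y hy1 hyk)
  -- assemble
  refine ⟨k, fun x => c (off + 2 * (x - 1)), fun x => c (off + 2 * (x - 1) + 1),
    fun x => (hMat (x - 1)).choose, fun x => (hOat (x - 1)).choose,
    hk1, le_min hkn hkm, ?_, ?_, ?_, ?_, ?_, ?_, ?_⟩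
  · -- NiceCycle
    refine ⟨hk1, ?_, ?_, ?_, ?_, ?_, ?_, ?_⟩
    · intro x hx y hy hxy
      simp only [Set.mem_Icc] at hx hy
      beta_reduce
      rcases Nat.lt_or_ge x y with h' | h'
      · exact hdistinct (2 * (x - 1)) (2 * (y - 1)) (by omega) (by omega)
      · exact (hdistinct (2 * (y - 1)) (2 * (x - 1)) (by omega) (by omega)).symm
    · intro x hx y hy hxy
      simp only [Set.mem_Icc] at hx hy
      beta_reduce
      rcases Nat.lt_or_ge x y with h' | h'
      · exact hdistinct (2 * (x - 1) + 1) (2 * (y - 1) + 1) (by omega) (by omega)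
      · exact (hdistinct (2 * (y - 1) + 1) (2 * (x - 1) + 1) (by omega) (by omega)).symm
    · intro x hx y hy
      simp only [Set.mem_Icc] at hx hy
      beta_reduce
      rcases Nat.lt_or_ge x (y + 1) with h' | h'
      · exact hdistinct (2 * (x - 1)) (2 * (y - 1) + 1) (by omega) (by omega)
      · exact (hdistinct (2 * (y - 1) + 1) (2 * (x - 1)) (by omega) (by omega)).symm
    · intro x hx
      exact ⟨(hMat (x - 1)).choose, hMsp (x - 1)⟩
    · intro x hx
      simp only [Set.mem_Icc] at hx
      refine ⟨(hOat (x - 1)).choose, ?_⟩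
      beta_reduce
      rw [← hnext x hx.1 hx.2]
      exact hOsp (x - 1)
    · intro x hx y hy hxy i hMx hMy
      simp only [Set.mem_Icc] at hx hy
      exact hnoMM2 x hx.1 hx.2 y hy.1 hy.2 hxy i hMx hMy
    · intro x hx y hy hxy j hOx hOy
      simp only [Set.mem_Icc] at hx hy
      beta_reduce at hOx hOy
      rw [← hnext x hx.1 hx.2] at hOx
      rw [← hnext y hy.1 hy.2] at hOy
      exact hnoOO2 x hx.1 hx.2 y hy.1 hy.2 hxy j hOx hOy
  · intro x hx
    exact hMsp (x - 1)
  · intro x hx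
    simp only [Set.mem_Icc] at hx
    beta_reduce
    rw [← hnext x hx.1 hx.2]
    exact hOsp (x - 1)
  · intro x hx y hy hxy
    simp only [Set.mem_Icc] at hx hy
    exact hpinj x hx.1 hx.2 y hy.1 hy.2 hxy
  · intro x hx y hy hxy
    simp only [Set.mem_Icc] at hx hy
    exact hlinj x hx.1 hx.2 y hy.1 hy.2 hxy
  · intro x hx
    simp only [Set.mem_Icc] at hx
    have := hproc x hx.1 hx.2
    exact Set.mem_Icc.mpr this
  · intro x hx
    simp only [Set.mem_Icc] at hx
    have := hloc x hx.1 hx.2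
    exact Set.mem_Icc.mpr this

end CyclePart
section SerialPart

/-- Acyclic constraint graph implies sequential consistency, for unambiguous causal traces
with a simple witness. -/
theorem acyclic_implies_sc (Ω : MTrace → ℕ → ℕ → ℕ → Prop) (τ : MTrace)
    (hsimp : IsSimple Ω) (hU : Unambiguous τ) (hCa : Causal τ)
    (hA : Acyclic Ω τ) : SeqConsistent τ := by
  classical
  set N := τ.length with hN
  set r : Fin N → Fin N → Prop :=
    fun a b => a = b ∨ Relation.TransGen (GEdge Ω τ) (a.1 + 1) (b.1 + 1) with hr
  have hnocyc : ∀ x, ¬ Relation.TransGen (GEdge Ω τ) x x := fun x h => hA ⟨x, h⟩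
  haveI : IsRefl (Fin N) r := ⟨fun a => Or.inl rfl⟩
  haveI : IsTrans (Fin N) r := by
    constructor
    rintro a b c (rfl | hab) (hbc | hbc)
    · exact Or.inl hbc
    · exact Or.inr hbc
    · exact Or.inr (hbc ▸ hab)
    · exact Or.inr (hab.trans hbc)
  haveI : IsAntisymm (Fin N) r := by
    constructor
    rintro a b (rfl | hab) hba
    · rfl
    · rcases hba with rfl | hba
      · rfl
      · exact absurd (hab.trans hba) (hnocyc _)
  haveI : IsPreorder (Fin N) r := ⟨⟩
  haveI hpo : IsPartialOrder (Fin N) r := ⟨⟩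
  obtain ⟨s, hlin, hrs⟩ := extend_partialOrder r
  haveI := hlin
  haveI : DecidableRel s := Classical.decRel s
  set l := Finset.sort Finset.univ s with hl
  have hlen : l.length = N := by rw [hl, Finset.length_sort, Finset.card_univ, Fintype.card_fin]
  have hnod : l.Nodup := Finset.sort_nodup _ s
  have hsort : List.Pairwise s l := Finset.pairwise_sort _ s
  have hmeml : ∀ a : Fin N, a ∈ l := fun a => (Finset.mem_sort s).mpr (Finset.mem_univ a)
  have hidx' : ∀ a : Fin N, l.idxOf a < l.length :=
    fun a => List.idxOf_lt_length_iff.mpr (hmeml a)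
  have hidx : ∀ a : Fin N, l.idxOf a < N := by
    intro a; have := hidx' a; omega
  -- order-respecting
  have hord : ∀ a b : Fin N, a ≠ b → s a b → l.idxOf a < l.idxOf b := by
    intro a b hne hsab
    rcases lt_trichotomy (l.idxOf a) (l.idxOf b) with h | h | h
    · exact h
    · exfalso; apply hne
      have h1 := List.idxOf_get (l := l) (hidx' a)
      have h2 := List.idxOf_get (l := l) (hidx' b)
      rw [← h1, ← h2]; congr 1; exact Fin.ext h
    · exfalso
      have hba : s b a := by
        have := hsort.rel_get_of_lt (a := ⟨l.idxOf b, hidx' b⟩)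
          (b := ⟨l.idxOf a, hidx' a⟩) (Fin.mk_lt_mk.mpr h)
        rwa [List.idxOf_get, List.idxOf_get] at this
      exact hne (hlin.toIsPartialOrder.toAntisymm.antisymm _ _ hsab hba)
  set f : ℕ → ℕ := fun u => if h : u ∈ Dom τ then l.idxOf (⟨u - 1, by
      obtain ⟨h1, h2⟩ := h; omega⟩ : Fin N) + 1 else u with hf
  set g : ℕ → ℕ := fun u => if h : u ∈ Dom τ then ((l.get ⟨u - 1, by
      obtain ⟨h1, h2⟩ := h; rw [hlen]; omega⟩).1 + 1) else u with hg
  have hfval : ∀ u (hb : u - 1 < N), u ∈ Dom τ → f u = l.idxOf (⟨u - 1, hb⟩ : Fin N) + 1 := by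
    intro u hb h; rw [hf]; simp only [h, dif_pos]
  have hgval : ∀ u (hb : u - 1 < l.length), u ∈ Dom τ →
      g u = (l.get ⟨u - 1, hb⟩).1 + 1 := by
    intro u hb h; rw [hg]; simp only [h, dif_pos]
  have hbN : ∀ u, u ∈ Dom τ → u - 1 < N := by
    intro u hu; obtain ⟨h1, h2⟩ := hu; omega
  have hbl : ∀ u, u ∈ Dom τ → u - 1 < l.length := by
    intro u hu; rw [hlen]; exact hbN u hu
  have hfdom : ∀ u ∈ Dom τ, f u ∈ Dom τ := by
    intro u hu; rw [hfval u (hbN u hu) hu]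
    have := hidx (⟨u - 1, hbN u hu⟩ : Fin N)
    exact ⟨by omega, by omega⟩
  have hgdom : ∀ u ∈ Dom τ, g u ∈ Dom τ := by
    intro u hu; rw [hgval u (hbl u hu) hu]
    have := (l.get ⟨u - 1, hbl u hu⟩).2
    exact ⟨by omega, by omega⟩
  have hgf : ∀ u ∈ Dom τ, g (f u) = u := by
    intro u hu
    have hub := hbN u hu
    have hfu : f u = l.idxOf (⟨u - 1, hub⟩ : Fin N) + 1 := hfval u hub hu
    have hdom2 : l.idxOf (⟨u - 1, hub⟩ : Fin N) + 1 ∈ Dom τ :=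
      ⟨by omega, by have := hidx (⟨u - 1, hub⟩ : Fin N); omega⟩
    have hb2 : l.idxOf (⟨u - 1, hub⟩ : Fin N) + 1 - 1 < l.length := by
      have := hidx' (⟨u - 1, hub⟩ : Fin N); omega
    rw [hfu, hgval _ hb2 hdom2]
    have heq : (⟨l.idxOf (⟨u - 1, hub⟩ : Fin N) + 1 - 1, hb2⟩ : Fin l.length) =
        ⟨l.idxOf (⟨u - 1, hub⟩ : Fin N), hidx' _⟩ := Fin.ext (by simp)
    rw [heq, List.idxOf_get]
    have hav : ((⟨u - 1, hub⟩ : Fin N) : ℕ) = u - 1 := rfl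
    obtain ⟨h1, h2⟩ := hu; omega
  have hfg : ∀ u ∈ Dom τ, f (g u) = u := by
    intro u hu
    have hub := hbl u hu
    have h2b : (l.get ⟨u - 1, hub⟩ : Fin N).1 + 1 - 1 < N := by
      have := (l.get ⟨u - 1, hub⟩).2; omega
    have hdom2 : (l.get ⟨u - 1, hub⟩ : Fin N).1 + 1 ∈ Dom τ :=
      ⟨by omega, by have := (l.get ⟨u - 1, hub⟩).2; omega⟩
    rw [hgval u hub hu, hfval _ h2b hdom2]
    have heq : (⟨(l.get ⟨u - 1, hub⟩ : Fin N).1 + 1 - 1, h2b⟩ : Fin N) = l.get ⟨u - 1, hub⟩ :=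
      Fin.ext (by simp)
    rw [heq, List.get_idxOf hnod]
    have hav : ((⟨u - 1, hub⟩ : Fin l.length) : ℕ) = u - 1 := rfl
    obtain ⟨h1, h2⟩ := hu; omega
  -- single edges respect f
  have hfe : ∀ x y, GEdge Ω τ x y → f x < f y := by
    intro x y hxy
    obtain ⟨hx, hy⟩ := gedge_dom hxy
    have hxb := hbN x hx
    have hyb := hbN y hy
    have htg : Relation.TransGen (GEdge Ω τ)
        ((⟨x - 1, hxb⟩ : Fin N).1 + 1) ((⟨y - 1, hyb⟩ : Fin N).1 + 1) := by
      show Relation.TransGen (GEdge Ω τ) (x - 1 + 1) (y - 1 + 1)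
      have e1 : x - 1 + 1 = x := by obtain ⟨h1, _⟩ := hx; omega
      have e2 : y - 1 + 1 = y := by obtain ⟨h1, _⟩ := hy; omega
      rw [e1, e2]; exact Relation.TransGen.single hxy
    have hnexy : x ≠ y := by
      rintro rfl
      exact hnocyc x (Relation.TransGen.single hxy)
    have hne : (⟨x - 1, hxb⟩ : Fin N) ≠ (⟨y - 1, hyb⟩ : Fin N) := by
      intro hcon
      apply hnexy
      have := congrArg Fin.val hcon
      simp only at this
      obtain ⟨h1, _⟩ := hx; obtain ⟨h1', _⟩ := hy; omega
    have := hord _ _ hne (hrs _ _ (Or.inr htg))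
    rw [hfval x hxb hx, hfval y hyb hy]; omega
  refine ⟨f, g, hfdom, hgdom, hgf, hfg, ?_, ?_⟩
  · intro i u v huv
    exact hfe u v (Or.inl ⟨i, huv⟩)
  · -- SerialFn
    intro u hu1 hu2
    have hud : u ∈ Dom τ := ⟨hu1, hu2⟩
    set z := g u with hz
    have hzd : z ∈ Dom τ := hgdom u hud
    have hfz : f z = u := hfg u hud
    have hgd : ∀ k, 1 ≤ k → k ≤ N → g k ∈ Dom τ := fun k a b => hgdom k ⟨a, b⟩
    have hfgk : ∀ k, 1 ≤ k → k ≤ N → f (g k) = k := fun k a b => hfg k ⟨a, b⟩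
    beta_reduce
    cases hop : (ev τ z).op with
    | W =>
      constructor
      · intro hnw
        exact absurd ⟨hop, rfl⟩ (hnw u hu1 le_rfl)
      · intro k hk1 hk2 hkop hkloc hnw
        rcases eq_or_lt_of_le hk2 with rfl | hk
        · rfl
        · exact absurd ⟨hop, rfl⟩ (hnw u hk le_rfl)
    | R =>
      set j := (ev τ z).loc with hj
      have hzls : z ∈ Lset τ j := ⟨hzd, rfl⟩
      have hzlr : z ∈ Lr τ j := ⟨hzls, hop⟩
      by_cases hd : (ev τ z).data = 0
      · constructor
        · intro _; exact hd
        · intro k hk1 hk2 hkop hkloc hnw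
          exfalso
          set w' := g k with hw'
          have hw'd : w' ∈ Dom τ := hgd k hk1 (hk2.trans hu2)
          have hw'w : w' ∈ Lw τ j := ⟨⟨hw'd, hkloc⟩, hkop⟩
          have hedge : GEdge Ω τ z w' := by
            refine Or.inr ⟨j, hzls, hw'w.1, Or.inr (Or.inl ⟨hd, (hU j w' hw'w).1⟩)⟩
          have := hfe z w' hedge
          rw [hfz, hfgk k hk1 (hk2.trans hu2)] at this
          omega
      · -- nonzero read data: causal write exists
        rcases hCa j z hzlr with h0 | ⟨w, hww, hwd⟩
        · exact absurd h0 hd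
        have hwdom : w ∈ Dom τ := hww.1.1
        have hfw : f w < u := by
          have hedge : GEdge Ω τ w z :=
            Or.inr ⟨j, hww.1, hzls, Or.inl ⟨hwd, hww.2, hop⟩⟩
          have := hfe w z hedge; rwa [hfz] at this
        have hfwd : f w ∈ Dom τ := hfdom w hwdom
        have hgfw : g (f w) = w := hgf w hwdom
        constructor
        · intro hnw
          exfalso
          refine hnw (f w) hfwd.1 (le_of_lt hfw) ?_
          rw [hgfw]
          exact ⟨hww.2, hww.1.2⟩
        · intro k hk1 hk2 hkop hkloc hnw
          set w' := g k with hw'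
          have hw'd : w' ∈ Dom τ := hgd k hk1 (hk2.trans hu2)
          have hw'w : w' ∈ Lw τ j := ⟨⟨hw'd, hkloc⟩, hkop⟩
          by_cases hww' : w' = w
          · rw [hww']; exact hwd.symm
          · exfalso
            rcases Nat.lt_or_ge w w' with hlt | hge
            · -- edge z → w' via (iii)
              have hOm : Ω τ j w w' := (hsimp τ j w w').mpr ⟨hww, hw'w, hlt⟩
              have hedge : GEdge Ω τ z w' :=
                Or.inr ⟨j, hzls, hw'w.1, Or.inr (Or.inr ⟨w, w', hww, hw'w, hOm, hwd, rfl⟩)⟩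
              have := hfe z w' hedge
              rw [hfz, hfgk k hk1 (hk2.trans hu2)] at this
              omega
            · have hlt : w' < w := by
                rcases Nat.lt_or_ge w' w with h | h
                · exact h
                · exact absurd (Nat.le_antisymm hge h) hww'
              have hOm : Ω τ j w' w := (hsimp τ j w' w).mpr ⟨hw'w, hww, hlt⟩
              have hedge : GEdge Ω τ w' w :=
                Or.inr ⟨j, hw'w.1, hww.1, Or.inr (Or.inr ⟨w', w, hw'w, hww, hOm, rfl, rfl⟩)⟩
              have hkfw : k < f w := by
                have := hfe w' w hedge
                rwa [hfgk k hk1 (hk2.trans hu2)] at this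
              refine hnw (f w) hkfw (le_of_lt hfw) ?_
              rw [hgfw]
              exact ⟨hww.2, hww.1.2⟩

end SerialPart
section PermPart

theorem exists_permOn (n k : ℕ) (hk : k ≤ n) (a : ℕ → ℕ)
    (ha : ∀ x ∈ Set.Icc 1 k, a x ∈ Set.Icc 1 n)
    (hinj : ∀ x ∈ Set.Icc 1 k, ∀ y ∈ Set.Icc 1 k, x ≠ y → a x ≠ a y)
    (b : ℕ → ℕ) (hb : ∀ x ∈ Set.Icc 1 k, b x ∈ Set.Icc 1 n)
    (hbinj : ∀ x ∈ Set.Icc 1 k, ∀ y ∈ Set.Icc 1 k, x ≠ y → b x ≠ b y) :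
    ∃ lam, PermOn n lam ∧ ∀ x ∈ Set.Icc 1 k, lam (a x) = b x := by
  classical
  have hmem : ∀ x : ℕ, x ∈ Finset.Icc 1 k ↔ x ∈ Set.Icc 1 k := by
    intro x; simp [Finset.mem_Icc, Set.mem_Icc]
  have hmemn : ∀ x : ℕ, x ∈ Finset.Icc 1 n ↔ x ∈ Set.Icc 1 n := by
    intro x; simp [Finset.mem_Icc, Set.mem_Icc]
  set sA := (Finset.Icc 1 k).image a with hsA
  set sB := (Finset.Icc 1 k).image b with hsB
  have hinjA : Set.InjOn a (Finset.Icc 1 k) := by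
    intro x hx y hy hxy
    by_contra hne
    exact hinj x ((hmem x).mp hx) y ((hmem y).mp hy) hne hxy
  have hinjB : Set.InjOn b (Finset.Icc 1 k) := by
    intro x hx y hy hxy
    by_contra hne
    exact hbinj x ((hmem x).mp hx) y ((hmem y).mp hy) hne hxy
  have hcardA : sA.card = k := by
    rw [hsA, Finset.card_image_of_injOn hinjA, Nat.card_Icc]; omega
  have hcardB : sB.card = k := by
    rw [hsB, Finset.card_image_of_injOn hinjB, Nat.card_Icc]; omega
  have hAsub : sA ⊆ Finset.Icc 1 n := by
    intro y hy
    rw [hsA, Finset.mem_image] at hy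
    obtain ⟨x, hx, rfl⟩ := hy
    exact (hmemn _).mpr (ha x ((hmem x).mp hx))
  have hBsub : sB ⊆ Finset.Icc 1 n := by
    intro y hy
    rw [hsB, Finset.mem_image] at hy
    obtain ⟨x, hx, rfl⟩ := hy
    exact (hmemn _).mpr (hb x ((hmem x).mp hx))
  set cA := Finset.Icc 1 n \ sA with hcA
  set cB := Finset.Icc 1 n \ sB with hcB
  have hcardc : cA.card = cB.card := by
    rw [hcA, hcB, Finset.card_sdiff_of_subset hAsub, Finset.card_sdiff_of_subset hBsub, hcardA, hcardB]
  set eqv := Finset.equivOfCardEq hcardc with heqv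
  set lam : ℕ → ℕ := fun y =>
    if h : y ∈ cA then (eqv ⟨y, h⟩ : ℕ)
    else if h2 : ∃ x, x ∈ Finset.Icc 1 k ∧ a x = y then b h2.choose
    else y with hlam
  have hlam_a : ∀ x ∈ Set.Icc 1 k, lam (a x) = b x := by
    intro x hx
    have hxF : x ∈ Finset.Icc 1 k := (hmem x).mpr hx
    have hmemA : a x ∈ sA := Finset.mem_image_of_mem a hxF
    have hnc : a x ∉ cA := by rw [hcA]; simp [hmemA]
    have h2 : ∃ x', x' ∈ Finset.Icc 1 k ∧ a x' = a x := ⟨x, hxF, rfl⟩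
    rw [hlam]
    simp only [hnc, dif_neg, not_false_iff, h2, dif_pos]
    congr 1
    exact hinjA h2.choose_spec.1 hxF h2.choose_spec.2
  have hmapsA : ∀ y ∈ sA, lam y ∈ sB := by
    intro y hy
    rw [hsA, Finset.mem_image] at hy
    obtain ⟨x, hx, rfl⟩ := hy
    rw [hlam_a x ((hmem x).mp hx)]
    exact Finset.mem_image_of_mem b hx
  have hmapsc : ∀ y (h : y ∈ cA), lam y = (eqv ⟨y, h⟩ : ℕ) := by
    intro y h
    rw [hlam]; simp [h]
  refine ⟨lam, ⟨?_, ?_, ?_⟩, hlam_a⟩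
  · -- MapsTo
    intro y hy
    rw [← hmemn] at hy
    by_cases h : y ∈ cA
    · rw [hmapsc y h]
      have : (eqv ⟨y, h⟩ : ℕ) ∈ Finset.Icc 1 n \ sB := (eqv ⟨y, h⟩).2
      exact (hmemn _).mp (Finset.mem_sdiff.mp this).1
    · have hyA : y ∈ sA := by
        by_contra hc
        exact h (Finset.mem_sdiff.mpr ⟨hy, hc⟩)
      exact (hmemn _).mp (hBsub (hmapsA y hyA))
  · -- InjOn
    intro y1 hy1 y2 hy2 heq
    rw [← hmemn] at hy1 hy2
    by_cases h1 : y1 ∈ cA <;> by_cases h2 : y2 ∈ cA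
    · rw [hmapsc y1 h1, hmapsc y2 h2] at heq
      have : eqv ⟨y1, h1⟩ = eqv ⟨y2, h2⟩ := Subtype.ext heq
      have := eqv.injective this
      exact congrArg Subtype.val this
    · exfalso
      have hy2A : y2 ∈ sA := by
        by_contra hc; exact h2 (Finset.mem_sdiff.mpr ⟨hy2, hc⟩)
      have e1 : lam y1 ∈ cB := by
        rw [hmapsc y1 h1]; exact (eqv ⟨y1, h1⟩).2
      have e2 : lam y2 ∈ sB := hmapsA y2 hy2A
      rw [heq] at e1
      exact (Finset.mem_sdiff.mp e1).2 e2
    · exfalso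
      have hy1A : y1 ∈ sA := by
        by_contra hc; exact h1 (Finset.mem_sdiff.mpr ⟨hy1, hc⟩)
      have e2 : lam y2 ∈ cB := by
        rw [hmapsc y2 h2]; exact (eqv ⟨y2, h2⟩).2
      have e1 : lam y1 ∈ sB := hmapsA y1 hy1A
      rw [heq] at e1
      exact (Finset.mem_sdiff.mp e2).2 e1
    · have hy1A : y1 ∈ sA := by
        by_contra hc; exact h1 (Finset.mem_sdiff.mpr ⟨hy1, hc⟩)
      have hy2A : y2 ∈ sA := by
        by_contra hc; exact h2 (Finset.mem_sdiff.mpr ⟨hy2, hc⟩)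
      rw [hsA, Finset.mem_image] at hy1A hy2A
      obtain ⟨x1, hx1, rfl⟩ := hy1A
      obtain ⟨x2, hx2, rfl⟩ := hy2A
      rw [hlam_a x1 ((hmem x1).mp hx1), hlam_a x2 ((hmem x2).mp hx2)] at heq
      exact congrArg a (hinjB hx1 hx2 heq)
  · -- SurjOn
    intro z hz
    rw [← hmemn] at hz
    by_cases h : z ∈ cB
    · refine ⟨(eqv.symm ⟨z, h⟩ : ℕ), ?_, ?_⟩
      · have : (eqv.symm ⟨z, h⟩ : ℕ) ∈ Finset.Icc 1 n \ sA := (eqv.symm ⟨z, h⟩).2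
        exact (hmemn _).mp (Finset.mem_sdiff.mp this).1
      · rw [hmapsc _ (eqv.symm ⟨z, h⟩).2]
        have : eqv ⟨(eqv.symm ⟨z, h⟩ : ℕ), (eqv.symm ⟨z, h⟩).2⟩ = ⟨z, h⟩ := by
          rw [show (⟨(eqv.symm ⟨z, h⟩ : ℕ), (eqv.symm ⟨z, h⟩).2⟩ : {x // x ∈ cA}) = eqv.symm ⟨z, h⟩ from rfl]
          exact eqv.apply_symm_apply _
        rw [this]
    · have hzB : z ∈ sB := by
        by_contra hc; exact h (Finset.mem_sdiff.mpr ⟨hz, hc⟩)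
      rw [hsB, Finset.mem_image] at hzB
      obtain ⟨x, hx, rfl⟩ := hzB
      exact ⟨a x, (hmemn _).mp (hAsub (Finset.mem_image_of_mem a hx)), hlam_a x ((hmem x).mp hx)⟩

end PermPart
section TransferPart

theorem sc_renameD (lam : ℕ → ℕ → ℕ) (hlam : IsRenaming lam) (τ : MTrace)
    (h : SeqConsistent τ) : SeqConsistent (renameD lam τ) := by
  obtain ⟨f, g, h1, h2, h3, h4, h5, h6⟩ := h
  have hdom : Dom (renameD lam τ) = Dom τ := by unfold renameD; rw [dom_map]
  have hev : ∀ x ∈ Dom τ, ev (renameD lam τ) x =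
      { ev τ x with data := lam (ev τ x).loc (ev τ x).data } := by
    intro x hx; unfold renameD; rw [ev_map _ _ hx]
  have hlen : (renameD lam τ).length = τ.length := by unfold renameD; simp
  refine ⟨f, g, ?_, ?_, ?_, ?_, ?_, ?_⟩
  · intro u hu; rw [hdom] at *; exact h1 u hu
  · intro u hu; rw [hdom] at *; exact h2 u hu
  · intro u hu; rw [hdom] at hu; exact h3 u hu
  · intro u hu; rw [hdom] at hu; exact h4 u hu
  · intro i u v huv
    apply h5 i u v
    obtain ⟨⟨hu, hup⟩, ⟨hv, hvp⟩, hlt⟩ := huv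
    rw [hdom] at hu hv
    rw [hev u hu] at hup
    rw [hev v hv] at hvp
    exact ⟨⟨hu, hup⟩, ⟨hv, hvp⟩, hlt⟩
  · rw [hlen]
    intro x hx1 hx2
    have hgdom : ∀ y, 1 ≤ y → y ≤ τ.length → g y ∈ Dom τ := fun y a b => h2 y ⟨a, b⟩
    have hxe : ∀ y, 1 ≤ y → y ≤ τ.length →
        ev (renameD lam τ) (g y) = { ev τ (g y) with data := lam (ev τ (g y)).loc (ev τ (g y)).data } :=
      fun y a b => hev _ (hgdom y a b)
    obtain ⟨hs1, hs2⟩ := h6 x hx1 hx2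
    beta_reduce
    constructor
    · intro hnw
      beta_reduce at hnw ⊢
      rw [hxe x hx1 hx2]
      have : (ev τ (g x)).data = 0 := by
        apply hs1
        intro j hj1 hj2 hc
        apply hnw j hj1 hj2
        rw [hxe j hj1 (hj2.trans hx2), hxe x hx1 hx2]
        exact ⟨hc.1, hc.2⟩
      simp only [this]
      exact hlam _
    · intro j hj1 hj2 hop hloc hnw
      beta_reduce at hop hloc hnw ⊢
      rw [hxe x hx1 hx2, hxe j hj1 (hj2.trans hx2)]
      rw [hxe j hj1 (hj2.trans hx2)] at hop
      rw [hxe j hj1 (hj2.trans hx2), hxe x hx1 hx2] at hloc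
      simp only at hop hloc ⊢
      have : (ev τ (g x)).data = (ev τ (g j)).data := by
        apply hs2 j hj1 hj2 hop hloc
        intro j' hj'1 hj'2 hc
        apply hnw j' hj'1 hj'2
        rw [hxe j' (by omega) (hj'2.trans hx2), hxe x hx1 hx2]
        exact hc
      rw [this, hloc]
section Assembly

theorem no_canonical_nice_cycle_implies_sc'
    (n m : ℕ) (hn : 1 ≤ n) (hm : 1 ≤ m)
    (M : MemSystem n m) (hDI : DataIndependent M)
    (hP : ProcSymmetric M) (hL : LocSymmetric M)
    (hC : ∀ τ ∈ M.traces, Causal τ)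
    (hW : ∃ Ω, IsWitness Ω ∧ IsSimple Ω ∧
      ∀ τ ∈ M.traces, Unambiguous τ →
        ∀ k, 1 ≤ k → k ≤ min n m → ∀ u w, ¬ CanonicalNiceCycle Ω τ k u w) :
    ∀ τ ∈ M.traces, SeqConsistent τ := by
  obtain ⟨Ω, hWit, hSimp, hNoCan⟩ := hW
  intro τ hτ
  obtain ⟨v, hv, hτv⟩ := hτ
  obtain ⟨τ', lam, hτ', hU, hlam, hlamv, rfl⟩ := (hDI v hv τ).mp hτv
  apply sc_renameD lam hlam
  apply acyclic_implies_sc Ω τ' hSimp hU (hC τ' hτ')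
  intro hcyc
  obtain ⟨v', hv', hτ'v⟩ := hτ'
  have hIR := (M.wf v' hv' τ' hτ'v).1
  obtain ⟨k, u, w, p, l, hk1, hk2, hNice, hM, hO, hpinj, hlinj, hpran, hlran⟩ :=
    cycle_to_nice Ω τ' n m hSimp hU (hC τ' ⟨v', hv', hτ'v⟩) hIR hcyc
  have hkn : k ≤ n := hk2.trans (min_le_left n m)
  have hkm : k ≤ m := hk2.trans (min_le_right n m)
  obtain ⟨π, hπ, hπa⟩ := exists_permOn n k hkn p hpran hpinj (fun x => x)
    (fun x hx => ⟨hx.1, hx.2.trans hkn⟩) (fun x _ y _ hxy => hxy)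
  obtain ⟨σ, hσ, hσa⟩ := exists_permOn m k hkm l hlran hlinj (fun x => cyc k x)
    (fun x hx => by have := cyc_mem hx; exact ⟨this.1, this.2.trans hkm⟩)
    (fun x hx y hy hxy h => hxy (cyc_inj hx hy h))
  set τ'' := renameL σ (renameP π τ') with hτ''def
  have hτ''S : τ'' ∈ M.S v' := hL σ hσ v' _ (hP π hπ v' τ' hτ'v)
  have hdom'' : Dom τ'' = Dom τ' := by
    rw [hτ''def]; unfold renameL renameP; rw [dom_map, dom_map]
  have hev'' : ∀ x ∈ Dom τ', ev τ'' x =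
      ⟨(ev τ' x).op, π (ev τ' x).proc, σ (ev τ' x).loc, (ev τ' x).data⟩ := by
    intro x hx
    rw [hτ''def]
    unfold renameL renameP
    rw [ev_map _ _ (by rwa [dom_map]), ev_map _ _ hx]
  -- location in range
  have hloc : ∀ x ∈ Dom τ', (ev τ' x).loc ∈ Set.Icc 1 m := by
    intro x hx
    have := hIR _ (ev_mem hx)
    exact ⟨this.2.2.1, this.2.2.2⟩
  have hproc : ∀ x ∈ Dom τ', (ev τ' x).proc ∈ Set.Icc 1 n := by
    intro x hx
    have := hIR _ (ev_mem hx)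
    exact ⟨this.1, this.2.1⟩
  -- Lset/Lw transfer
  have hLset : ∀ j x, x ∈ Lset τ' j → x ∈ Lset τ'' (σ j) := by
    intro j x hx
    refine ⟨hdom''.symm ▸ hx.1, ?_⟩
    rw [hev'' x hx.1]; simp [hx.2]
  have hLw : ∀ j x, x ∈ Lw τ' j → x ∈ Lw τ'' (σ j) := by
    intro j x hx
    refine ⟨hLset j x hx.1, ?_⟩
    rw [hev'' x hx.1.1]; exact hx.2
  -- reverse: membership in Lset τ'' j'' determines
  have hLset' : ∀ j'' x, x ∈ Lset τ'' j'' → x ∈ Dom τ' ∧ σ (ev τ' x).loc = j'' := by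
    intro j'' x hx
    have hxd : x ∈ Dom τ' := hdom'' ▸ hx.1
    refine ⟨hxd, ?_⟩
    have := hx.2; rw [hev'' x hxd] at this; exact this
  have hU'' : Unambiguous τ'' := by
    intro j'' x hx
    obtain ⟨hxd, hxl⟩ := hLset' j'' x hx.1
    have hxop : (ev τ' x).op = MemOp.W := by
      have := hx.2; rwa [hev'' x hxd] at this
    have hxw : x ∈ Lw τ' (ev τ' x).loc := ⟨⟨hxd, rfl⟩, hxop⟩
    have hdx : (ev τ'' x).data = (ev τ' x).data := by rw [hev'' x hxd]
    constructor
    · rw [hdx]; exact (hU _ x hxw).1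
    · intro y hy hyx
      obtain ⟨hyd, hyl⟩ := hLset' j'' y hy.1
      have hyop : (ev τ' y).op = MemOp.W := by
        have := hy.2; rwa [hev'' y hyd] at this
      have hll : (ev τ' y).loc = (ev τ' x).loc :=
        hσ.injOn (hloc y hyd) (hloc x hxd) (hyl.trans hxl.symm)
      have hyw : y ∈ Lw τ' (ev τ' x).loc := ⟨⟨hyd, hll⟩, hyop⟩
      have hdy : (ev τ'' y).data = (ev τ' y).data := by rw [hev'' y hyd]
      rw [hdx, hdy]
      exact (hU _ x hxw).2 y hyw hyx
  -- Mrel transfer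
  have hMrel : ∀ i x y, Mrel τ' i x y → Mrel τ'' (π i) x y := by
    intro i x y hxy
    refine ⟨⟨hdom''.symm ▸ hxy.1.1, ?_⟩, ⟨hdom''.symm ▸ hxy.2.1.1, ?_⟩, hxy.2.2⟩
    · rw [hev'' x hxy.1.1]; simp [hxy.1.2]
    · rw [hev'' y hxy.2.1.1]; simp [hxy.2.1.2]
  have hMrel' : ∀ i x y, Mrel τ'' i x y → x ∈ Dom τ' ∧ π (ev τ' x).proc = i := by
    intro i x y hxy
    have hxd : x ∈ Dom τ' := hdom'' ▸ hxy.1.1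
    refine ⟨hxd, ?_⟩
    have := hxy.1.2; rwa [hev'' x hxd] at this
  -- OmegaE transfer
  have hOme : ∀ j x y, OmegaE Ω τ' j x y → OmegaE Ω τ'' (σ j) x y := by
    intro j x y hxy
    obtain ⟨hx, hy, hcase⟩ := hxy
    have hdx : (ev τ'' x).data = (ev τ' x).data := by rw [hev'' x hx.1]
    have hdy : (ev τ'' y).data = (ev τ' y).data := by rw [hev'' y hy.1]
    refine ⟨hLset j x hx, hLset j y hy, ?_⟩
    rcases hcase with ⟨h1, h2, h3⟩ | ⟨h1, h2⟩ | ⟨a, b, ha, hb, hab, hda, hdb⟩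
    · left
      refine ⟨by rw [hdx, hdy]; exact h1, ?_, ?_⟩
      · rw [hev'' x hx.1]; exact h2
      · rw [hev'' y hy.1]; exact h3
    · right; left; rw [hdx, hdy]; exact ⟨h1, h2⟩
    · right; right
      refine ⟨a, b, hLw j a ha, hLw j b hb, ?_, ?_, ?_⟩
      · rw [hSimp τ'' (σ j) a b]
        have := (hSimp τ' j a b).mp hab
        exact ⟨hLw j a ha, hLw j b hb, this.2.2⟩
      · have hda' : (ev τ'' a).data = (ev τ' a).data := by rw [hev'' a ha.1.1]
        rw [hda', hdx]; exact hda
      · have hdb' : (ev τ'' b).data = (ev τ' b).data := by rw [hev'' b hb.1.1]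
        rw [hdb', hdy]; exact hdb
  -- now build the canonical nice cycle in τ''
  have hpx : ∀ x ∈ Set.Icc 1 k, (ev τ' (u x)).proc = p x := fun x hx => (hM x hx).1.2
  have hlx : ∀ x ∈ Set.Icc 1 k, (ev τ' (w x)).loc = l x := fun x hx => (hO x hx).1.2
  have hcan : CanonicalNiceCycle Ω τ'' k u w := by
    obtain ⟨_, hd1, hd2, hd3, _, _, _, _⟩ := hNice
    refine ⟨⟨hk1, hd1, hd2, hd3, ?_, ?_, ?_, ?_⟩, ?_, ?_⟩
    · intro x hx; exact ⟨π (p x), hMrel (p x) _ _ (hM x hx)⟩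
    · intro x hx; exact ⟨σ (l x), hOme (l x) _ _ (hO x hx)⟩
    · intro x hx y hy hxy i hix hiy
      have h1 := hMrel' i _ _ hix
      have h2 := hMrel' i _ _ hiy
      rw [hpx x hx] at h1
      rw [hpx y hy] at h2
      have : p x = p y := hπ.injOn (hpran x hx) (hpran y hy) (h1.2.trans h2.2.symm)
      exact hpinj x hx y hy hxy this
    · intro x hx y hy hxy j hjx hjy
      have h1 := hLset' j _ hjx.1
      have h2 := hLset' j _ hjy.1
      rw [hlx x hx] at h1
      rw [hlx y hy] at h2
      have : l x = l y := hσ.injOn (hlran x hx) (hlran y hy) (h1.2.trans h2.2.symm)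
      exact hlinj x hx y hy hxy this
    · intro x hx
      have := hMrel (p x) _ _ (hM x hx)
      rwa [hπa x hx] at this
    · intro x hx
      have := hOme (l x) _ _ (hO x hx)
      rwa [hσa x hx] at this
  exact hNoCan τ'' ⟨v', hv', hτ''S⟩ hU'' k hk1 hk2 u w hcan

end Assembly
/-- For a data independent, processor symmetric, and location symmetric
memory system all of whose traces are causal: if there is a simple witness Ω such
that no unambiguous trace of S(n,m) has a canonical k-nice cycle for any
1 ≤ k ≤ min{n,m}, then every trace of S(n,m) is sequentially consistent. -/
theorem no_canonical_nice_cycle_implies_sc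
    (n m : ℕ) (hn : 1 ≤ n) (hm : 1 ≤ m)
    (M : MemSystem n m) (hDI : DataIndependent M)
    (hP : ProcSymmetric M) (hL : LocSymmetric M)
    (hC : ∀ τ ∈ M.traces, Causal τ)
    (hW : ∃ Ω, IsWitness Ω ∧ IsSimple Ω ∧
      ∀ τ ∈ M.traces, Unambiguous τ →
        ∀ k, 1 ≤ k → k ≤ min n m → ∀ u w, ¬ CanonicalNiceCycle Ω τ k u w) :
    ∀ τ ∈ M.traces, SeqConsistent τ := by
  exact no_canonical_nice_cycle_implies_sc' n m hn hm M hDI hP hL hC hW
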